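/- Let μ > 0, σ > 0, k1, k2 > 0, and define g(a) = (σ²/(2μ²))·(k1 + k2 - k2·e^{-(2μ/σ²)((k1/k2)a + 2μ/k2)} - k1·e^{2μa/σ²}) for a ∈ ℝ. Then g'(a) > 0 for all a < -2μ/(k1+k2), g(-2μ/k1) = (σ²k1/(2μ²))·(1 - e^{-4μ²/(σ²k1)}) > 0, and g(a) → -∞ as a → -∞. Consequently g has a unique root a* on (-∞, -2μ/k1). -/
import Mathlib


set_option maxHeartbeats 1000000

open Real Filter

theorem stmt3 (μ σ k1 k2 : ℝ) (hμ : 0 < μ) (hσ : 0 < σ) (hk1 : 0 < k1) (hk2 : 0 < k2)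
    (g : ℝ → ℝ)
    (hg : ∀ a, g a = (σ ^ 2 / (2 * μ ^ 2)) *
        (k1 + k2 - k2 * Real.exp (-(2 * μ / σ ^ 2) * ((k1 / k2) * a + 2 * μ / k2))
          - k1 * Real.exp (2 * μ * a / σ ^ 2))) :
    (∀ a : ℝ, a < -2 * μ / (k1 + k2) → 0 < deriv g a) ∧
    g (-2 * μ / k1) = (σ ^ 2 * k1 / (2 * μ ^ 2)) * (1 - Real.exp (-4 * μ ^ 2 / (σ ^ 2 * k1))) ∧
    0 < g (-2 * μ / k1) ∧
    Tendsto g atBot atBot ∧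
    (∃! a : ℝ, a < -2 * μ / k1 ∧ g a = 0) := by
  have hσ2 : (0:ℝ) < σ ^ 2 := by positivity
  have hμ2 : (0:ℝ) < μ ^ 2 := by positivity
  have hgfun : g = fun a => (σ ^ 2 / (2 * μ ^ 2)) *
        (k1 + k2 - k2 * Real.exp (-(2 * μ / σ ^ 2) * ((k1 / k2) * a + 2 * μ / k2))
          - k1 * Real.exp (2 * μ * a / σ ^ 2)) := funext hg
  -- derivative
  have h1 : ∀ a : ℝ, HasDerivAt (fun a => -(2 * μ / σ ^ 2) * ((k1 / k2) * a + 2 * μ / k2))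
      (-(2 * μ / σ ^ 2) * (k1 / k2)) a := by
    intro a
    have := (((hasDerivAt_id a).const_mul (k1 / k2)).add_const (2 * μ / k2)).const_mul
      (-(2 * μ / σ ^ 2))
    simpa using this
  have h2 : ∀ a : ℝ, HasDerivAt (fun a : ℝ => 2 * μ * a / σ ^ 2) (2 * μ / σ ^ 2) a := by
    intro a
    have := (((hasDerivAt_id a).const_mul (2 * μ)).div_const (σ ^ 2))
    simpa using this
  have hD : ∀ a : ℝ, HasDerivAt g ((σ ^ 2 / (2 * μ ^ 2)) *
      ((0 - k2 * (Real.exp (-(2 * μ / σ ^ 2) * ((k1 / k2) * a + 2 * μ / k2)) *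
          (-(2 * μ / σ ^ 2) * (k1 / k2)))) - k1 * (Real.exp (2 * μ * a / σ ^ 2) * (2 * μ / σ ^ 2)))) a := by
    intro a
    rw [hgfun]
    exact ((((hasDerivAt_const a (k1 + k2)).sub (((h1 a).exp).const_mul k2)).sub
      (((h2 a).exp).const_mul k1)).const_mul _)
  have hcont : Continuous g := by
    rw [hgfun]; continuity
  -- part 1
  have hpos : ∀ a : ℝ, a < -2 * μ / (k1 + k2) → 0 < deriv g a := by
    intro a ha
    have ha' : a * (k1 + k2) < -2 * μ := (lt_div_iff₀ (by positivity)).mp ha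
    have hexp : Real.exp (2 * μ * a / σ ^ 2) <
        Real.exp (-(2 * μ / σ ^ 2) * ((k1 / k2) * a + 2 * μ / k2)) := by
      apply Real.exp_lt_exp.mpr
      have hsub : -(2 * μ / σ ^ 2) * ((k1 / k2) * a + 2 * μ / k2) - 2 * μ * a / σ ^ 2
          = (2 * μ / (σ ^ 2 * k2)) * (-(a * (k1 + k2) + 2 * μ)) := by
        field_simp
        ring
      nlinarith [mul_pos (by positivity : (0:ℝ) < 2 * μ / (σ ^ 2 * k2))
        (by linarith : (0:ℝ) < -(a * (k1 + k2) + 2 * μ))]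
    rw [(hD a).deriv]
    have hC : (0:ℝ) < σ ^ 2 / (2 * μ ^ 2) := by positivity
    have hcoef : (0:ℝ) < 2 * μ / σ ^ 2 * k1 := by positivity
    have key : ∀ E1 E2 : ℝ, (0 - k2 * (E1 * (-(2 * μ / σ ^ 2) * (k1 / k2))))
        - k1 * (E2 * (2 * μ / σ ^ 2)) = (2 * μ / σ ^ 2 * k1) * (E1 - E2) := by
      intro E1 E2
      field_simp
      ring
    rw [key]
    exact mul_pos hC (mul_pos hcoef (by linarith))
  -- part 2
  have hval : g (-2 * μ / k1) = (σ ^ 2 * k1 / (2 * μ ^ 2)) *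
      (1 - Real.exp (-4 * μ ^ 2 / (σ ^ 2 * k1))) := by
    rw [hg]
    have e1 : -(2 * μ / σ ^ 2) * ((k1 / k2) * (-2 * μ / k1) + 2 * μ / k2) = 0 := by
      field_simp
      ring
    have e2 : 2 * μ * (-2 * μ / k1) / σ ^ 2 = -4 * μ ^ 2 / (σ ^ 2 * k1) := by
      field_simp
      ring
    rw [e1, e2, Real.exp_zero]
    ring
  -- part 3
  have hvalpos : 0 < g (-2 * μ / k1) := by
    rw [hval]
    have : Real.exp (-4 * μ ^ 2 / (σ ^ 2 * k1)) < 1 := by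
      apply Real.exp_lt_one_iff.mpr
      apply div_neg_of_neg_of_pos (by nlinarith) (by positivity)
    have hC : (0:ℝ) < σ ^ 2 * k1 / (2 * μ ^ 2) := by positivity
    nlinarith
  -- part 4
  have htend : Tendsto g atBot atBot := by
    have hα : Tendsto (fun a : ℝ => -(2 * μ / σ ^ 2) * ((k1 / k2) * a + 2 * μ / k2)) atBot atTop := by
      have h : (fun a : ℝ => -(2 * μ / σ ^ 2) * ((k1 / k2) * a + 2 * μ / k2))
          = fun a : ℝ => (-(2 * μ / σ ^ 2) * (k1 / k2)) * a + (-(2 * μ / σ ^ 2) * (2 * μ / k2)) := by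
        funext a; ring
      rw [h]
      apply tendsto_atTop_add_const_right
      exact (tendsto_const_mul_atTop_of_neg (by
        have : (0:ℝ) < 2 * μ / σ ^ 2 * (k1 / k2) := by positivity
        linarith)).mpr tendsto_id
    have hterm : Tendsto (fun a : ℝ => (-(σ ^ 2 / (2 * μ ^ 2) * k2)) *
        Real.exp (-(2 * μ / σ ^ 2) * ((k1 / k2) * a + 2 * μ / k2))) atBot atBot := by
      apply (tendsto_const_mul_atBot_of_neg (by nlinarith [sq_nonneg σ, mul_pos (div_pos hσ2 (by positivity : (0:ℝ) < 2*μ^2)) hk2] : -(σ ^ 2 / (2 * μ ^ 2) * k2) < 0)).mpr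
      exact Real.tendsto_exp_atTop.comp hα
    have hbd : ∀ a : ℝ, (σ ^ 2 / (2 * μ ^ 2)) * (k1 + k2)
        - (σ ^ 2 / (2 * μ ^ 2)) * k1 * Real.exp (2 * μ * a / σ ^ 2)
        ≤ (σ ^ 2 / (2 * μ ^ 2)) * (k1 + k2) := by
      intro a
      have : (0:ℝ) ≤ (σ ^ 2 / (2 * μ ^ 2)) * k1 * Real.exp (2 * μ * a / σ ^ 2) := by positivity
      linarith
    have h : g = (fun a : ℝ => (σ ^ 2 / (2 * μ ^ 2)) * (k1 + k2)
        - (σ ^ 2 / (2 * μ ^ 2)) * k1 * Real.exp (2 * μ * a / σ ^ 2)) +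
        (fun a : ℝ => (-(σ ^ 2 / (2 * μ ^ 2) * k2)) *
          Real.exp (-(2 * μ / σ ^ 2) * ((k1 / k2) * a + 2 * μ / k2))) := by
      rw [hgfun]; funext a; simp [Pi.add_apply]; ring
    rw [h]
    exact tendsto_atBot_add_left_of_ge _ _ hbd hterm
  -- part 5
  refine ⟨hpos, hval, hvalpos, htend, ?_⟩
  have hle : -2 * μ / k1 ≤ -2 * μ / (k1 + k2) := by
    rw [div_le_div_iff₀ hk1 (by positivity)]
    nlinarith
  have hmono : StrictMonoOn g (Set.Iic (-2 * μ / k1)) := by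
    apply strictMonoOn_of_deriv_pos (convex_Iic _) hcont.continuousOn
    intro x hx
    rw [interior_Iic] at hx
    exact hpos x (lt_of_lt_of_le hx hle)
  obtain ⟨x, hx0, hxlt⟩ : ∃ x : ℝ, g x < 0 ∧ x < -2 * μ / k1 :=
    ((htend.eventually (eventually_lt_atBot 0)).and (eventually_lt_atBot (-2 * μ / k1))).exists
  have hivt := intermediate_value_Icc (le_of_lt hxlt) hcont.continuousOn
  have h0mem : (0:ℝ) ∈ Set.Icc (g x) (g (-2 * μ / k1)) := ⟨le_of_lt hx0, le_of_lt hvalpos⟩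
  obtain ⟨a, ha, hga⟩ := hivt h0mem
  have halt : a < -2 * μ / k1 := by
    rcases lt_or_eq_of_le ha.2 with h | h
    · exact h
    · exfalso; rw [h] at hga; linarith
  refine ⟨a, ⟨halt, hga⟩, ?_⟩
  rintro b ⟨hblt, hgb⟩
  exact hmono.injOn (le_of_lt hblt) (le_of_lt halt) (by rw [hgb, hga])
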